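/- Let 𝒳, 𝒴, 𝒜 be nonempty finite types, p_X a probability mass function on 𝒳, ℓ : 𝒳 × 𝒜 → ℝ a nonnegative loss function, and R ≥ 0. Define V_I(R) = min_a Σ_x p_X(x)ℓ(x,a) − inf { Σ_{x,a} p_X(x) p_{A|X}(a|x) ℓ(x,a) : p_{A|X} a channel from 𝒳 to 𝒜 with I(p_X, p_{A|X}) ≤ R }. Then for every channel p_{Y|X} from 𝒳 to 𝒴 with I(p_X, p_{Y|X}) ≤ R, the average gain satisfies gain(p_X, p_{Y|X}) ≤ V_I(R). -/

import Mathlib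

open Finset Real

/-- A probability mass function on a finite type. -/
def IsPMF {Z : Type*} [Fintype Z] (p : Z → ℝ) : Prop :=
  (∀ z, 0 ≤ p z) ∧ ∑ z, p z = 1

/-- A channel from `X` to `A`: a family of pmfs on `A` indexed by `X`. -/
def IsChannel {X A : Type*} [Fintype X] [Fintype A] (W : X → A → ℝ) : Prop :=
  ∀ x, IsPMF (W x)

/-- Shannon's mutual information `I(p_X, p_{A|X})`, with the `0 log 0 = 0` convention. -/
noncomputable def mutualInfo {X A : Type*} [Fintype X] [Fintype A]
    (pX : X → ℝ) (W : X → A → ℝ) : ℝ :=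
  ∑ x, ∑ a, if pX x * W x a = 0 then 0
    else pX x * W x a * Real.log (W x a / (∑ x', pX x' * W x' a))

/-- Expected loss `Σ_{x,a} p_X(x) p_{A|X}(a|x) ℓ(x,a)`. -/
noncomputable def expLoss {X A : Type*} [Fintype X] [Fintype A]
    (pX : X → ℝ) (ℓ : X → A → ℝ) (W : X → A → ℝ) : ℝ :=
  ∑ x, ∑ a, pX x * W x a * ℓ x a

/-- The average gain of a channel `p_{Y|X}` for loss `ℓ`. -/
noncomputable def avgGain {X Y A : Type*} [Fintype X] [Fintype Y] [Fintype A]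
    (pX : X → ℝ) (ℓ : X → A → ℝ) (W : X → Y → ℝ) : ℝ :=
  (⨅ a, ∑ x, pX x * ℓ x a) - ∑ y, ⨅ a, ∑ x, pX x * W x y * ℓ x a

/-- The log-sum inequality, with `0 log 0 = 0` convention. -/
lemma log_sum_ineq {ι : Type*} (s : Finset ι) (a b : ι → ℝ)
    (ha : ∀ i ∈ s, 0 ≤ a i) (hb : ∀ i ∈ s, 0 ≤ b i)
    (hab : ∀ i ∈ s, b i = 0 → a i = 0) :
    (if (∑ i ∈ s, a i) = 0 then 0
      else (∑ i ∈ s, a i) * Real.log ((∑ i ∈ s, a i) / (∑ i ∈ s, b i)))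
      ≤ ∑ i ∈ s, if a i = 0 then 0 else a i * Real.log (a i / b i) := by
  set A := ∑ i ∈ s, a i with hA
  set B := ∑ i ∈ s, b i with hB
  by_cases hA0 : A = 0
  · simp only [hA0, if_pos]
    have hz : ∀ i ∈ s, a i = 0 := fun i hi =>
      (Finset.sum_eq_zero_iff_of_nonneg ha).mp hA0 i hi
    rw [Finset.sum_congr rfl (fun i hi => by rw [if_pos (hz i hi)])]
    simp
  · have hApos : 0 < A := lt_of_le_of_ne (Finset.sum_nonneg ha) (Ne.symm hA0)
    have hBpos : 0 < B := by
      rcases lt_or_eq_of_le (Finset.sum_nonneg hb) with h | h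
      · exact h
      · exact absurd (Finset.sum_eq_zero (fun i hi => hab i hi
          ((Finset.sum_eq_zero_iff_of_nonneg hb).mp h.symm i hi))) hA0
    rw [if_neg hA0]
    have key : ∀ i ∈ s,
        a i * Real.log (A / B) + (a i - b i * (A / B)) ≤
          (if a i = 0 then 0 else a i * Real.log (a i / b i)) := by
      intro i hi
      by_cases hai : a i = 0
      · rw [if_pos hai, hai]
        have h1 : 0 ≤ b i * (A / B) := mul_nonneg (hb i hi) (by positivity)
        nlinarith
      · rw [if_neg hai]
        have haipos : 0 < a i := lt_of_le_of_ne (ha i hi) (Ne.symm hai)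
        have hbipos : 0 < b i := by
          rcases lt_or_eq_of_le (hb i hi) with h | h
          · exact h
          · exact absurd (hab i hi h.symm) hai
        have hx : 0 < a i * B / (b i * A) := by positivity
        have hlog := Real.one_sub_inv_le_log_of_pos hx
        have hlogeq : Real.log (a i * B / (b i * A)) =
            Real.log (a i / b i) - Real.log (A / B) := by
          rw [show a i * B / (b i * A) = (a i / b i) / (A / B) by field_simp]
          exact Real.log_div (by positivity) (by positivity)
        have hinv : (a i * B / (b i * A))⁻¹ = b i * A / (a i * B) := by
          field_simp
        rw [hinv, hlogeq] at hlog
        have h2 : a i * (1 - b i * A / (a i * B)) ≤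
            a i * (Real.log (a i / b i) - Real.log (A / B)) :=
          mul_le_mul_of_nonneg_left hlog haipos.le
        have h3 : a i * (1 - b i * A / (a i * B)) = a i - b i * (A / B) := by
          field_simp
        nlinarith
    calc A * Real.log (A / B)
        = ∑ i ∈ s, (a i * Real.log (A / B) + (a i - b i * (A / B))) := by
          rw [Finset.sum_add_distrib, Finset.sum_sub_distrib, ← Finset.sum_mul,
            ← Finset.sum_mul, ← hA, ← hB]
          field_simp
          ring
      _ ≤ _ := Finset.sum_le_sum key

/-- Data-processing inequality for deterministic post-processing. -/
lemma mutualInfo_comp_le {X Y A : Type*} [Fintype X] [Fintype Y] [Fintype A]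
    [DecidableEq A]
    (pX : X → ℝ) (hpX : IsPMF pX) (W : X → Y → ℝ) (hW : IsChannel W) (f : Y → A) :
    mutualInfo pX (fun x a => ∑ y ∈ Finset.univ.filter (fun y => f y = a), W x y)
      ≤ mutualInfo pX W := by
  set Q : X → A → ℝ := fun x a => ∑ y ∈ Finset.univ.filter (fun y => f y = a), W x y with hQ
  show mutualInfo pX Q ≤ mutualInfo pX W
  unfold mutualInfo
  apply Finset.sum_le_sum
  intro x _
  rw [← Finset.sum_fiberwise_of_maps_to (g := f) (fun y _ => Finset.mem_univ (f y))]
  apply Finset.sum_le_sum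
  intro c _
  have key := log_sum_ineq (Finset.univ.filter (fun y => f y = c))
    (fun y => pX x * W x y) (fun y => pX x * (∑ x', pX x' * W x' y))
    (fun y _ => mul_nonneg (hpX.1 x) ((hW x).1 y))
    (fun y _ => mul_nonneg (hpX.1 x)
      (Finset.sum_nonneg fun x' _ => mul_nonneg (hpX.1 x') ((hW x').1 y)))
    ?_
  · beta_reduce at key
    have hsa : ∑ y ∈ Finset.univ.filter (fun y => f y = c), pX x * W x y = pX x * Q x c := by
      rw [hQ, Finset.mul_sum]
    have hsb : ∑ y ∈ Finset.univ.filter (fun y => f y = c), pX x * (∑ x', pX x' * W x' y)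
        = pX x * (∑ x', pX x' * Q x' c) := by
      calc ∑ y ∈ Finset.univ.filter (fun y => f y = c), pX x * (∑ x', pX x' * W x' y)
          = pX x * ∑ y ∈ Finset.univ.filter (fun y => f y = c), ∑ x', pX x' * W x' y := by
            rw [Finset.mul_sum]
        _ = pX x * ∑ x', ∑ y ∈ Finset.univ.filter (fun y => f y = c), pX x' * W x' y := by
            rw [Finset.sum_comm]
        _ = pX x * (∑ x', pX x' * Q x' c) := by
            rw [Finset.sum_congr rfl fun x' _ => (by rw [hQ, Finset.mul_sum] :
              pX x' * Q x' c = ∑ y ∈ Finset.univ.filter (fun y => f y = c), pX x' * W x' y).symm]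
    rw [hsa, hsb] at key
    refine le_trans ?_ (le_trans key (Finset.sum_le_sum fun y hy => ?_))
    · by_cases h : pX x * Q x c = 0
      · rw [if_pos h, if_pos h]
      · rw [if_neg h, if_neg h]
        have hpx : pX x ≠ 0 := fun h0 => h (by rw [h0]; ring)
        rw [mul_div_mul_left _ _ hpx]
    · by_cases h : pX x * W x y = 0
      · rw [if_pos h, if_pos h]
      · rw [if_neg h, if_neg h]
        have hpx : pX x ≠ 0 := fun h0 => h (by rw [h0]; ring)
        rw [mul_div_mul_left _ _ hpx]
  · intro y _ h0
    rcases mul_eq_zero.mp h0 with h | h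
    · simp [h]
    · exact (Finset.sum_eq_zero_iff_of_nonneg
        (fun x' _ => mul_nonneg (hpX.1 x') ((hW x').1 y))).mp h x (Finset.mem_univ x)

theorem gain_le_value_of_shannon_information
    {X Y A : Type*} [Fintype X] [Fintype Y] [Fintype A]
    [Nonempty X] [Nonempty Y] [Nonempty A]
    (pX : X → ℝ) (hpX : IsPMF pX)
    (ℓ : X → A → ℝ) (hℓ : ∀ x a, 0 ≤ ℓ x a)
    (R : ℝ) (hR : 0 ≤ R)
    (W : X → Y → ℝ) (hW : IsChannel W) (hWR : mutualInfo pX W ≤ R) :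
    avgGain pX ℓ W ≤
      (⨅ a, ∑ x, pX x * ℓ x a) -
        sInf (expLoss pX ℓ '' {p : X → A → ℝ | IsChannel p ∧ mutualInfo pX p ≤ R}) := by
  classical
  set g : Y → A → ℝ := fun y a => ∑ x, pX x * W x y * ℓ x a with hg
  have hmin : ∀ y, ∃ a0, ∀ a, g y a0 ≤ g y a := fun y => Finite.exists_min (g y)
  choose f hf using hmin
  have hinf : ∀ y, (⨅ a, g y a) = g y (f y) := fun y =>
    le_antisymm (ciInf_le (Finite.bddBelow_range (g y)) (f y)) (le_ciInf (hf y))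
  set Q : X → A → ℝ := fun x a => ∑ y ∈ Finset.univ.filter (fun y => f y = a), W x y with hQ
  have hQchan : IsChannel Q := by
    intro x
    constructor
    · intro a
      exact Finset.sum_nonneg fun y _ => (hW x).1 y
    · rw [hQ]
      simp only
      rw [Finset.sum_fiberwise_of_maps_to (fun y _ => Finset.mem_univ (f y))]
      exact (hW x).2
  have hQI : mutualInfo pX Q ≤ R :=
    le_trans (mutualInfo_comp_le pX hpX W hW f) hWR
  have hQloss : expLoss pX ℓ Q = ∑ y, g y (f y) := by
    unfold expLoss
    rw [← Finset.sum_fiberwise_of_maps_to (g := f) (fun y _ => Finset.mem_univ (f y))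
      (fun y => g y (f y)), Finset.sum_comm]
    apply Finset.sum_congr rfl
    intro a _
    calc ∑ x, pX x * Q x a * ℓ x a
        = ∑ x, ∑ y ∈ Finset.univ.filter (fun y => f y = a), pX x * W x y * ℓ x a := by
          apply Finset.sum_congr rfl
          intro x _
          rw [hQ]
          simp only
          rw [Finset.mul_sum, Finset.sum_mul]
      _ = ∑ y ∈ Finset.univ.filter (fun y => f y = a), ∑ x, pX x * W x y * ℓ x a :=
          Finset.sum_comm
      _ = ∑ y ∈ Finset.univ.filter (fun y => f y = a), g y (f y) := by
          apply Finset.sum_congr rfl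
          intro y hy
          have hfy : f y = a := by simpa using (Finset.mem_filter.mp hy).2
          rw [hg, hfy]
  have hmem : expLoss pX ℓ Q ∈
      expLoss pX ℓ '' {p : X → A → ℝ | IsChannel p ∧ mutualInfo pX p ≤ R} :=
    ⟨Q, ⟨hQchan, hQI⟩, rfl⟩
  have hbdd : BddBelow (expLoss pX ℓ '' {p : X → A → ℝ | IsChannel p ∧ mutualInfo pX p ≤ R}) := by
    refine ⟨0, ?_⟩
    rintro z ⟨p, hp, rfl⟩
    exact Finset.sum_nonneg fun x _ => Finset.sum_nonneg fun a _ =>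
      mul_nonneg (mul_nonneg (hpX.1 x) ((hp.1 x).1 a)) (hℓ x a)
  have hsInf := csInf_le hbdd hmem
  unfold avgGain
  have hsum : ∑ y, ⨅ a, ∑ x, pX x * W x y * ℓ x a = ∑ y, g y (f y) :=
    Finset.sum_congr rfl fun y _ => hinf y
  rw [hsum]
  rw [hQloss] at hsInf
  linarith
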